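/- arXiv:2101.10485 — 2 statements merged into one kernel-verified Lean document; each statement's English description precedes it below -/
import Mathlib

section
/- For any set A, Ev A satisfies the Int-sheaf gluing condition: given event streams (S,a) ∈ Ev A(ℓ) and (S',a') ∈ Ev A(ℓ') that are compatible at the common endpoint — i.e., ℓ ∈ S if and only if 0 ∈ S', and in that case a(ℓ) = a'(0) — there exists a unique event stream (T,c) ∈ Ev A(ℓ+ℓ') whose restriction along [0,ℓ] is (S,a) and whose restriction along [ℓ,ℓ+ℓ'] is (S',a'). -/
/-- A length-`ℓ` event stream of type `A`: a finite set `S ⊆ [0,ℓ]` of time-stamps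
together with an event map `S → A`. -/
structure Ev (A : Type) (ℓ : ℝ) where
  S : Finset ℝ
  hS : ∀ s ∈ S, s ∈ Set.Icc (0 : ℝ) ℓ
  val : {s : ℝ // s ∈ S} → A

/-- Restriction of an event stream along the subinterval `[t, t+ℓ'] ⊆ [0,ℓ]`:
keep the time-stamps in `[t, t+ℓ']`, translated by `-t`, with inherited values. -/
noncomputable def Ev.restrict {A : Type} {ℓ : ℝ} (e : Ev A ℓ) (t ℓ' : ℝ)
    (ht : 0 ≤ t) (hl : 0 ≤ ℓ') (h : t + ℓ' ≤ ℓ) : Ev A ℓ' where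
  S := (e.S.filter (fun s => t ≤ s ∧ s ≤ t + ℓ')).image (fun s => s - t)
  hS := by
    intro s hs
    simp only [Finset.mem_image, Finset.mem_filter] at hs
    obtain ⟨u, ⟨_, hu1, hu2⟩, rfl⟩ := hs
    exact Set.mem_Icc.mpr ⟨by linarith, by linarith⟩
  val := fun u => e.val ⟨u.1 + t, by
    obtain ⟨s, hs, hst⟩ := Finset.mem_image.mp u.2
    have hsu : u.1 + t = s := by linarith
    rw [hsu]
    exact (Finset.mem_filter.mp hs).1⟩


theorem Ev.ext' {A : Type} {ℓ : ℝ} {e f : Ev A ℓ} (hS : e.S = f.S)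
    (hv : ∀ s (h : s ∈ e.S) (h' : s ∈ f.S), e.val ⟨s, h⟩ = f.val ⟨s, h'⟩) : e = f := by
  obtain ⟨S, hSb, v⟩ := e
  obtain ⟨S', hSb', v'⟩ := f
  simp only at hS
  subst hS
  simp only [Ev.mk.injEq, heq_eq_eq, true_and]
  funext u
  exact hv u.1 u.2 u.2

theorem Ev.mem_restrict {A : Type} {ℓ : ℝ} (e : Ev A ℓ) (t ℓ' : ℝ)
    (ht : 0 ≤ t) (hl : 0 ≤ ℓ') (h : t + ℓ' ≤ ℓ) (s : ℝ) :
    s ∈ (e.restrict t ℓ' ht hl h).S ↔ s + t ∈ e.S ∧ 0 ≤ s ∧ s ≤ ℓ' := by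
  simp only [Ev.restrict, Finset.mem_image, Finset.mem_filter]
  constructor
  · rintro ⟨u, ⟨hu, h1, h2⟩, rfl⟩
    exact ⟨by rwa [sub_add_cancel], by linarith, by linarith⟩
  · rintro ⟨h1, h2, h3⟩
    exact ⟨s + t, ⟨h1, by linarith, by linarith⟩, by ring⟩

theorem Ev.restrict_val {A : Type} {ℓ : ℝ} (e : Ev A ℓ) (t ℓ' : ℝ)
    (ht : 0 ≤ t) (hl : 0 ≤ ℓ') (h : t + ℓ' ≤ ℓ) (s : ℝ)
    (hs : s ∈ (e.restrict t ℓ' ht hl h).S) (hs' : s + t ∈ e.S) :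
    (e.restrict t ℓ' ht hl h).val ⟨s, hs⟩ = e.val ⟨s + t, hs'⟩ := rfl

noncomputable def Ev.glue {A : Type} {ℓ ℓ' : ℝ} (hℓ : 0 ≤ ℓ) (hℓ' : 0 ≤ ℓ')
    (e : Ev A ℓ) (e' : Ev A ℓ') : Ev A (ℓ + ℓ') where
  S := e.S ∪ e'.S.image (· + ℓ)
  hS := by
    intro s hs
    simp only [Finset.mem_union, Finset.mem_image] at hs
    rcases hs with h | ⟨u, hu, rfl⟩
    · have := e.hS s h
      exact ⟨this.1, by linarith [this.2]⟩
    · have := e'.hS u hu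
      exact ⟨by linarith [this.1], by linarith [this.2]⟩
  val := fun u => if h : u.1 ∈ e.S then e.val ⟨u.1, h⟩ else
    e'.val ⟨u.1 - ℓ, by
      have hu := u.2
      simp only [Finset.mem_union, Finset.mem_image] at hu
      rcases hu with h' | ⟨v, hv, hveq⟩
      · exact absurd h' h
      · rwa [show u.1 - ℓ = v by linarith]⟩

theorem Ev.mem_glue {A : Type} {ℓ ℓ' : ℝ} (hℓ : 0 ≤ ℓ) (hℓ' : 0 ≤ ℓ')
    (e : Ev A ℓ) (e' : Ev A ℓ') (s : ℝ) :
    s ∈ (Ev.glue hℓ hℓ' e e').S ↔ s ∈ e.S ∨ ∃ u ∈ e'.S, u + ℓ = s := by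
  simp only [Ev.glue, Finset.mem_union, Finset.mem_image]

theorem Ev.glue_val_left {A : Type} {ℓ ℓ' : ℝ} (hℓ : 0 ≤ ℓ) (hℓ' : 0 ≤ ℓ')
    (e : Ev A ℓ) (e' : Ev A ℓ') (s : ℝ) (hT : s ∈ (Ev.glue hℓ hℓ' e e').S)
    (hs : s ∈ e.S) :
    (Ev.glue hℓ hℓ' e e').val ⟨s, hT⟩ = e.val ⟨s, hs⟩ := by
  simp only [Ev.glue, dif_pos hs]

theorem Ev.glue_val_right {A : Type} {ℓ ℓ' : ℝ} (hℓ : 0 ≤ ℓ) (hℓ' : 0 ≤ ℓ')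
    (e : Ev A ℓ) (e' : Ev A ℓ') (s : ℝ) (hT : s ∈ (Ev.glue hℓ hℓ' e e').S)
    (hs : s ∉ e.S) (hs' : s - ℓ ∈ e'.S) :
    (Ev.glue hℓ hℓ' e e').val ⟨s, hT⟩ = e'.val ⟨s - ℓ, hs'⟩ := by
  simp only [Ev.glue, dif_neg hs]

theorem Ev.val_congr {A : Type} {ℓ : ℝ} (e : Ev A ℓ) {a b : ℝ} (h : a = b)
    (pa : a ∈ e.S) (pb : b ∈ e.S) : e.val ⟨a, pa⟩ = e.val ⟨b, pb⟩ := by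
  subst h; rfl


/-- For any set `A`, `Ev A` satisfies the `Int`-sheaf gluing condition: event streams
`(S,a) ∈ Ev A (ℓ)` and `(S',a') ∈ Ev A (ℓ')` compatible at the common endpoint
(`ℓ ∈ S ↔ 0 ∈ S'`, and in that case `a ℓ = a' 0`) glue to a unique event stream of
length `ℓ + ℓ'` restricting to `(S,a)` on `[0,ℓ]` and to `(S',a')` on `[ℓ,ℓ+ℓ']`. -/
theorem ev_gluing (A : Type) (ℓ ℓ' : ℝ) (hℓ : 0 ≤ ℓ) (hℓ' : 0 ≤ ℓ')
    (e : Ev A ℓ) (e' : Ev A ℓ')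
    (hmem : ℓ ∈ e.S ↔ 0 ∈ e'.S)
    (hval : ∀ (h1 : ℓ ∈ e.S) (h2 : 0 ∈ e'.S), e.val ⟨ℓ, h1⟩ = e'.val ⟨0, h2⟩) :
    ∃! g : Ev A (ℓ + ℓ'),
      g.restrict 0 ℓ le_rfl hℓ (by linarith) = e ∧
      g.restrict ℓ ℓ' hℓ hℓ' le_rfl = e' := by
  refine ⟨Ev.glue hℓ hℓ' e e', ⟨?_, ?_⟩, ?_⟩
  · -- restriction to [0,ℓ] is e
    apply Ev.ext'
    · ext s
      rw [Ev.mem_restrict, add_zero, Ev.mem_glue]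
      constructor
      · rintro ⟨h | ⟨u, hu, rfl⟩, h0, h1⟩
        · exact h
        · have hb := e'.hS u hu
          have : u = 0 := le_antisymm (by linarith) hb.1
          subst this
          rw [zero_add]
          exact hmem.mpr hu
      · intro hs
        have hb := e.hS s hs
        exact ⟨Or.inl hs, hb.1, hb.2⟩
    · intro s h h'
      have hg : s + 0 ∈ (Ev.glue hℓ hℓ' e e').S := ((Ev.mem_restrict _ _ _ _ _ _ s).mp h).1
      rw [Ev.restrict_val _ _ _ _ _ _ s h hg]
      have hg' : s ∈ (Ev.glue hℓ hℓ' e e').S := by rwa [add_zero] at hg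
      rw [Ev.val_congr _ (add_zero s) hg hg']
      exact Ev.glue_val_left hℓ hℓ' e e' s hg' h'
  · -- restriction to [ℓ,ℓ+ℓ'] is e'
    apply Ev.ext'
    · ext s
      rw [Ev.mem_restrict, Ev.mem_glue]
      constructor
      · rintro ⟨h | ⟨u, hu, huv⟩, h0, h1⟩
        · have hb := e.hS _ h
          have hs0 : s = 0 := le_antisymm (by linarith [hb.2]) h0
          subst hs0
          exact hmem.mp (by rwa [zero_add] at h)
        · have : u = s := by linarith
          subst this
          exact hu
      · intro hs
        have hb := e'.hS s hs
        exact ⟨Or.inr ⟨s, hs, rfl⟩, hb.1, hb.2⟩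
    · intro s h h'
      have hg : s + ℓ ∈ (Ev.glue hℓ hℓ' e e').S := ((Ev.mem_restrict _ _ _ _ _ _ s).mp h).1
      rw [Ev.restrict_val _ _ _ _ _ _ s h hg]
      by_cases hc : s + ℓ ∈ e.S
      · have hb := e.hS _ hc
        have hb' := e'.hS s h'
        have hs0 : s = 0 := le_antisymm (by linarith [hb.2]) hb'.1
        subst hs0
        rw [Ev.glue_val_left hℓ hℓ' e e' _ hg hc]
        have hl : ℓ ∈ e.S := by rwa [zero_add] at hc
        rw [Ev.val_congr e (zero_add ℓ) hc hl]
        exact hval hl h'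
      · have hs' : s + ℓ - ℓ ∈ e'.S := by rwa [add_sub_cancel_right]
        rw [Ev.glue_val_right hℓ hℓ' e e' _ hg hc hs']
        exact Ev.val_congr e' (add_sub_cancel_right s ℓ) hs' h'
  · -- uniqueness
    rintro g ⟨h1, h2⟩
    subst h1
    subst h2
    apply Ev.ext'
    · ext s
      rw [Ev.mem_glue]
      constructor
      · intro hs
        have hb := g.hS s hs
        by_cases hc : s ≤ ℓ
        · left
          rw [Ev.mem_restrict]
          exact ⟨by rwa [add_zero], hb.1, hc⟩
        · right
          refine ⟨s - ℓ, ?_, by ring⟩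
          rw [Ev.mem_restrict]
          exact ⟨by rwa [sub_add_cancel], by linarith, by linarith [hb.2]⟩
      · rintro (hs | ⟨u, hu, rfl⟩)
        · rw [Ev.mem_restrict] at hs
          have := hs.1
          rwa [add_zero] at this
        · rw [Ev.mem_restrict] at hu
          exact hu.1
    · intro s hg hglue
      by_cases hc : s ∈ (g.restrict 0 ℓ le_rfl hℓ (by linarith)).S
      · rw [Ev.glue_val_left _ _ _ _ s hglue hc]
        have hg0 : s + 0 ∈ g.S := ((Ev.mem_restrict _ _ _ _ _ _ s).mp hc).1
        rw [Ev.restrict_val _ _ _ _ _ _ s hc hg0]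
        exact (Ev.val_congr g (add_zero s) hg0 hg).symm
      · have hs' : s - ℓ ∈ (g.restrict ℓ ℓ' hℓ hℓ' le_rfl).S := by
          rcases (Ev.mem_glue _ _ _ _ s).mp hglue with h | ⟨u, hu, rfl⟩
          · exact absurd h hc
          · rwa [show u + ℓ - ℓ = u by ring]
        rw [Ev.glue_val_right _ _ _ _ s hglue hc hs']
        have hgs : s - ℓ + ℓ ∈ g.S := ((Ev.mem_restrict _ _ _ _ _ _ _).mp hs').1
        rw [Ev.restrict_val _ _ _ _ _ _ _ hs' hgs]
        exact (Ev.val_congr g (sub_add_cancel s ℓ) hgs hg).symm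
end

section
/- For any Int-presheaf A satisfying the Int-sheaf gluing condition and any ε > 0, the ε-extended presheaf A_ε defined by A_ε(ℓ) := A(ℓ+ε), with restriction along ↑t : ℓ' → ℓ given by A's restriction along ↑t : ℓ'+ε → ℓ+ε, is an Int-presheaf satisfying the Int-sheaf gluing condition. (This is the state sheaf of the ε-delay machine.) -/
open scoped NNReal

/-- An `Int`-presheaf: a functor `Int^op → Set`. Objects of `Int` are nonnegative reals
(durations) `ℓ`; a morphism `↑t : ℓ' → ℓ` is a translation with `t + ℓ' ≤ ℓ`. The data
is a family of sets of sections together with restriction maps `res t ℓ'` (restriction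
along `[t, t+ℓ'] ⊆ [0,ℓ]`) which respect identities and composition. -/
structure IntPresheaf where
  obj : ℝ≥0 → Type
  res : ∀ {ℓ : ℝ≥0} (t ℓ' : ℝ≥0), t + ℓ' ≤ ℓ → obj ℓ → obj ℓ'
  res_id : ∀ (ℓ : ℝ≥0) (x : obj ℓ), res 0 ℓ (by simp) x = x
  res_comp : ∀ {ℓ ℓ' ℓ'' : ℝ≥0} (s t : ℝ≥0) (h1 : s + ℓ' ≤ ℓ) (h2 : t + ℓ'' ≤ ℓ')
    (h3 : s + t + ℓ'' ≤ ℓ) (x : obj ℓ),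
    res t ℓ'' h2 (res s ℓ' h1 x) = res (s + t) ℓ'' h3 x

/-- The `Int`-sheaf gluing condition: sections `p ∈ P(ℓ)` and `p' ∈ P(ℓ')` agreeing at
the common endpoint (`p|[ℓ,ℓ] = p'|[0,0]`) glue to a unique section `q ∈ P(ℓ+ℓ')` with
`q|[0,ℓ] = p` and `q|[ℓ,ℓ+ℓ'] = p'`. -/
def GluingCondition (P : IntPresheaf) : Prop :=
  ∀ (ℓ ℓ' : ℝ≥0) (p : P.obj ℓ) (p' : P.obj ℓ'),
    P.res ℓ 0 (by simp) p = P.res 0 0 (by simp) p' →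
    ∃! q : P.obj (ℓ + ℓ'),
      P.res 0 ℓ (by simp) q = p ∧ P.res ℓ ℓ' le_rfl q = p'

/-- The `ε`-extended presheaf `A_ε` with `A_ε(ℓ) := A(ℓ + ε)`; restriction along
`↑t : ℓ' → ℓ` is given by `A`'s restriction along `↑t : ℓ' + ε → ℓ + ε`. This is the
state sheaf of the `ε`-delay machine. -/
def IntPresheaf.shift (A : IntPresheaf) (ε : ℝ≥0) : IntPresheaf where
  obj ℓ := A.obj (ℓ + ε)
  res t ℓ' h x := A.res t (ℓ' + ε)
    (by rw [← add_assoc]; exact add_le_add h le_rfl) x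
  res_id := by
    intro ℓ x
    exact A.res_id (ℓ + ε) x
  res_comp := by
    intro ℓ ℓ' ℓ'' s t h1 h2 h3 x
    exact A.res_comp s t _ _ _ x

lemma IntPresheaf.res_congr (A : IntPresheaf) {L ℓ'' : ℝ≥0} {t t' : ℝ≥0} (h : t = t')
    (h1 : t + ℓ'' ≤ L) (h2 : t' + ℓ'' ≤ L) (x : A.obj L) :
    A.res t ℓ'' h1 x = A.res t' ℓ'' h2 x := by subst h; rfl

/-- Restricting along two "full length" maps back and forth is the identity. -/
lemma IntPresheaf.res_full_full (A : IntPresheaf) {L M : ℝ≥0} (h1 : (0:ℝ≥0) + M ≤ L)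
    (h2 : (0:ℝ≥0) + L ≤ M) (x : A.obj L) :
    A.res 0 L h2 (A.res 0 M h1 x) = x := by
  rw [A.res_comp 0 0 h1 h2 (by simp) x,
    A.res_congr (show (0:ℝ≥0)+0 = 0 by simp) (by simp) (by simp) x]
  exact A.res_id L x

/-- Composition of restrictions, with a flexible total-translation argument. -/
lemma IntPresheaf.res_res (A : IntPresheaf) {L M N : ℝ≥0} (s t u : ℝ≥0) (h : s + t = u)
    (h1 : s + M ≤ L) (h2 : t + N ≤ M) (h3 : u + N ≤ L) (x : A.obj L) :
    A.res t N h2 (A.res s M h1 x) = A.res u N h3 x := by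
  subst h; exact A.res_comp s t h1 h2 h3 x

/-- For any `Int`-presheaf `A` satisfying the `Int`-sheaf gluing condition and any
`ε > 0`, the `ε`-extended presheaf `A_ε` with `A_ε(ℓ) := A(ℓ + ε)` is an
`Int`-presheaf satisfying the `Int`-sheaf gluing condition. -/
theorem shift_gluing (A : IntPresheaf) (ε : ℝ≥0) (hε : 0 < ε)
    (hA : GluingCondition A) : GluingCondition (A.shift ε) := by
  intro ℓ ℓ' p p' hpp'
  -- unfold the shifted presheaf's restrictions
  have hpp : A.res ℓ (0+ε) (by simp) p = A.res 0 (0+ε) (by simp) p' := hpp'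
  have hεℓ' : ε + ℓ' ≤ ℓ' + ε := (add_comm ε ℓ').le
  -- endpoint agreement of `p` and `p'` at length 0
  have h1 : A.res (ℓ+ε) 0 (by simp) p = A.res ε 0 (by simp [le_add_self]) p' := by
    rw [← A.res_res (M := 0+ε) ℓ ε (ℓ+ε) rfl (by simp) (by simp) (by simp) p, hpp,
      A.res_res (M := 0+ε) 0 ε ε (by simp) (by simp) (by simp) (by simp [le_add_self]) p']
  -- agreement of `p` and `p'` on the overlap of length ε
  have h0 : A.res ℓ ε le_rfl p = A.res 0 ε (by simp [le_add_self]) p' := by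
    rw [← A.res_res (M := 0+ε) ℓ 0 ℓ (by simp) (by simp) (by simp) (by simp) p, hpp,
      A.res_res (M := 0+ε) 0 0 0 (by simp) (by simp) (by simp) (by simp [le_add_self]) p']
  -- glue `p` with the tail of `p'`
  have hend : A.res (ℓ+ε) 0 (by simp) p = A.res 0 0 (by simp) (A.res ε ℓ' hεℓ' p') := by
    rw [A.res_res ε 0 ε (by simp) hεℓ' (by simp) (by simp [le_add_self]) p']
    exact h1
  obtain ⟨q₀, ⟨hq₀l, hq₀r⟩, hq₀u⟩ := hA (ℓ+ε) ℓ' p (A.res ε ℓ' hεℓ' p') hend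
  -- the overlap gluing, used for uniqueness of the middle part
  have hend2 : A.res ε 0 (by simp) (A.res ℓ ε le_rfl p)
      = A.res 0 0 (by simp) (A.res ε ℓ' hεℓ' p') := by
    rw [A.res_res ℓ ε (ℓ+ε) rfl le_rfl (by simp) (by simp) p,
      A.res_res ε 0 ε (by simp) hεℓ' (by simp) (by simp [le_add_self]) p']
    exact h1
  obtain ⟨c, -, hcu⟩ := hA ε ℓ' (A.res ℓ ε le_rfl p) (A.res ε ℓ' hεℓ' p') hend2
  have hεℓ'2 : (0:ℝ≥0) + (ε + ℓ') ≤ ℓ' + ε := by rw [zero_add, add_comm]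
  have hℓ'ε2 : (0:ℝ≥0) + (ℓ' + ε) ≤ ε + ℓ' := by rw [zero_add, add_comm]
  -- any section of length ℓ'+ε whose two parts are those of p' equals p'
  have key : ∀ (r : A.obj (ℓ' + ε)),
      A.res 0 ε (by simp [le_add_self]) r = A.res ℓ ε le_rfl p →
      A.res ε ℓ' hεℓ' r = A.res ε ℓ' hεℓ' p' → r = p' := by
    intro r hr1 hr2
    have hc1 : A.res 0 (ε+ℓ') hεℓ'2 r = c := by
      refine hcu _ ⟨?_, ?_⟩
      · rw [A.res_res (M := ε+ℓ') 0 0 0 (by simp) hεℓ'2 (by simp [le_add_self]) (by simp [le_add_self]) r]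
        exact hr1
      · rw [A.res_res (M := ε+ℓ') 0 ε ε (by simp) hεℓ'2 le_rfl hεℓ' r]
        exact hr2
    have hc2 : A.res 0 (ε+ℓ') hεℓ'2 p' = c := by
      refine hcu _ ⟨?_, ?_⟩
      · rw [A.res_res (M := ε+ℓ') 0 0 0 (by simp) hεℓ'2 (by simp [le_add_self]) (by simp [le_add_self]) p']
        exact h0.symm
      · rw [A.res_res (M := ε+ℓ') 0 ε ε (by simp) hεℓ'2 le_rfl hεℓ' p']
    have e1 : A.res 0 (ε+ℓ') hεℓ'2 r = A.res 0 (ε+ℓ') hεℓ'2 p' := hc1.trans hc2.symm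
    have := congrArg (A.res 0 (ℓ'+ε) hℓ'ε2) e1
    rwa [A.res_full_full hεℓ'2 hℓ'ε2 r, A.res_full_full hεℓ'2 hℓ'ε2 p'] at this
  have hb1 : (0:ℝ≥0) + (ℓ + ℓ' + ε) ≤ ℓ + ε + ℓ' := by rw [zero_add]; exact le_of_eq (by ring)
  have hb2 : (0:ℝ≥0) + (ℓ + ε + ℓ') ≤ ℓ + ℓ' + ε := by rw [zero_add]; exact le_of_eq (by ring)
  refine ⟨A.res 0 (ℓ+ℓ'+ε) hb1 q₀, ⟨?_, ?_⟩, ?_⟩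
  · show A.res 0 (ℓ+ε) _ (A.res 0 (ℓ+ℓ'+ε) hb1 q₀) = p
    rw [A.res_res (M := ℓ+ℓ'+ε) 0 0 0 (by simp) hb1
      (by rw [zero_add]; exact add_le_add le_self_add le_rfl)
      (by rw [zero_add]; exact le_self_add) q₀]
    exact hq₀l
  · show A.res ℓ (ℓ'+ε) _ (A.res 0 (ℓ+ℓ'+ε) hb1 q₀) = p'
    rw [A.res_res (M := ℓ+ℓ'+ε) (N := ℓ'+ε) 0 ℓ ℓ (by simp) hb1 (le_of_eq (by ring)) (le_of_eq (by ring)) q₀]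
    refine key _ ?_ ?_
    · rw [A.res_res ℓ 0 ℓ (by simp) (le_of_eq (by ring)) (by simp [le_add_self]) (by simp) q₀,
        ← hq₀l, A.res_res 0 ℓ ℓ (by simp) (by simp) le_rfl (by simp) q₀]
    · rw [A.res_res ℓ ε (ℓ+ε) rfl (le_of_eq (by ring)) hεℓ' le_rfl q₀]
      exact hq₀r
  · rintro y ⟨hy1, hy2⟩
    replace hy1 : A.res 0 (ℓ+ε) (by simp [le_add_self]) y = p := hy1
    replace hy2 : A.res ℓ (ℓ'+ε) (le_of_eq (by ring)) y = p' := hy2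
    have hy₀ : A.res 0 (ℓ+ε+ℓ') hb2 y = q₀ := by
      refine hq₀u _ ⟨?_, ?_⟩
      · rw [A.res_res 0 0 0 (by simp) hb2 (by simp) (by simp [le_add_self]) y]
        exact hy1
      · rw [A.res_res 0 (ℓ+ε) (ℓ+ε) (by simp) hb2 le_rfl (le_of_eq (by ring)) y,
          ← A.res_res ℓ ε (ℓ+ε) rfl (le_of_eq (by ring)) hεℓ' (le_of_eq (by ring)) y, hy2]
    have := congrArg (A.res 0 (ℓ+ℓ'+ε) hb1) hy₀
    rwa [A.res_full_full hb2 hb1 y] at this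
end
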